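/- The threshold frequency predicate Φ_r^ω is continuous in frequency (with respect to the discrete metric on {0,1}) if and only if r is irrational, for r ∈ (0,1). -/

import Mathlib

/-- The frequency of the value `ω` in the (nonempty) vector `v ∈ Ω^{n+1}`:
its multiplicity divided by the length. -/
def freqOf {Ω : Type} [DecidableEq Ω] {n : ℕ} (v : Fin (n + 1) → Ω) (ω : Ω) : ℚ :=
  ((Finset.univ.filter (fun i => v i = ω)).card : ℚ) / (n + 1)

/-- The threshold frequency predicate `Φ_r^ω` (with `Φ_r^ω(v) = 1` iff the frequency of
`ω` in `v` is at least `r`) is continuous in frequency — with respect to the discrete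
metric on `{0,1}`, i.e. for every sequence of vectors `V k` (of arbitrary lengths) whose
frequency functions converge pointwise to the frequency function of some vector `u`,
eventually `Φ_r^ω(V k) = Φ_r^ω(u)` — if and only if `r` is irrational, for `r ∈ (0,1)`.
(Here `Ω` has at least two elements.) -/
lemma card_lt_filter {N a : ℕ} (ha : a < N) :
    (Finset.univ.filter (fun i : Fin N => i.val < a)).card = a := by
  have : (Finset.univ.filter (fun i : Fin N => i.val < a)) = Finset.Iio (⟨a, ha⟩ : Fin N) := by
    ext i; simp [Finset.mem_Iio, Fin.lt_def]
  rw [this, Fin.card_Iio]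

lemma freq_vec_omega {Ω : Type} [DecidableEq Ω] {ω ω₂ : Ω} (hω : ω₂ ≠ ω) {n a : ℕ}
    (ha : a < n + 1) :
    freqOf (fun i : Fin (n+1) => if i.val < a then ω else ω₂) ω = a / (n+1) := by
  unfold freqOf
  congr 2
  have : (Finset.univ.filter (fun i : Fin (n+1) => (if i.val < a then ω else ω₂) = ω))
      = Finset.univ.filter (fun i : Fin (n+1) => i.val < a) := by
    apply Finset.filter_congr
    intro i _
    split_ifs with h <;> simp [h, hω]
  rw [this, card_lt_filter ha]

lemma freq_vec_omega₂ {Ω : Type} [DecidableEq Ω] {ω ω₂ : Ω} (hω : ω₂ ≠ ω) {n a : ℕ}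
    (ha : a < n + 1) :
    freqOf (fun i : Fin (n+1) => if i.val < a then ω else ω₂) ω₂ = ((n+1) - a) / (n+1) := by
  unfold freqOf
  have : (Finset.univ.filter (fun i : Fin (n+1) => (if i.val < a then ω else ω₂) = ω₂))
      = Finset.univ.filter (fun i : Fin (n+1) => ¬ i.val < a) := by
    apply Finset.filter_congr
    intro i _
    split_ifs with h
    · simp only [if_pos h, h, not_true_eq_false, iff_false]
      exact fun hh => hω hh.symm
    · simp [h]
  rw [this, Finset.filter_not, Finset.card_sdiff_of_subset (Finset.filter_subset _ _),
    card_lt_filter ha]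
  rw [Finset.card_univ, Fintype.card_fin, Nat.cast_sub ha.le]
  push_cast
  ring

lemma freq_vec_other {Ω : Type} [DecidableEq Ω] {ω ω₂ ω' : Ω} (h1 : ω' ≠ ω) (h2 : ω' ≠ ω₂)
    {n a : ℕ} :
    freqOf (fun i : Fin (n+1) => if i.val < a then ω else ω₂) ω' = 0 := by
  unfold freqOf
  have : (Finset.univ.filter (fun i : Fin (n+1) => (if i.val < a then ω else ω₂) = ω')) = ∅ := by
    apply Finset.filter_false_of_mem
    intro i _
    split_ifs <;> [exact fun hh => h1 hh.symm; exact fun hh => h2 hh.symm]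
  simp [this]

lemma tendsto_aux (a b : ℕ) (hb : 0 < b) :
    Filter.Tendsto (fun k : ℕ => ((a : ℝ) * (k+1) - 1) / ((b : ℝ) * (k+1)))
      Filter.atTop (nhds ((a : ℝ) / b)) := by
  have heq : (fun k : ℕ => ((a : ℝ) * (k+1) - 1) / ((b : ℝ) * (k+1)))
      = fun k : ℕ => ((a : ℝ) - 1/(k+1)) / b := by
    funext k
    have hk : ((k : ℝ) + 1) ≠ 0 := by positivity
    have hb' : (b : ℝ) ≠ 0 := by positivity
    field_simp
  rw [heq]
  have h0 : Filter.Tendsto (fun k : ℕ => (a : ℝ) - 1/(k+1)) Filter.atTop (nhds ((a:ℝ) - 0)) :=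
    (tendsto_const_nhds).sub tendsto_one_div_add_atTop_nhds_zero_nat
  simpa using h0.div_const (b : ℝ)

lemma tendsto_aux₂ (a b : ℕ) (hb : 0 < b) (hab : a ≤ b) :
    Filter.Tendsto (fun k : ℕ => (((b : ℝ) - a) * (k+1) + 1) / ((b : ℝ) * (k+1)))
      Filter.atTop (nhds (((b : ℝ) - a) / b)) := by
  have heq : (fun k : ℕ => (((b : ℝ) - a) * (k+1) + 1) / ((b : ℝ) * (k+1)))
      = fun k : ℕ => (((b : ℝ) - a) + 1/(k+1)) / b := by
    funext k
    have hk : ((k : ℝ) + 1) ≠ 0 := by positivity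
    have hb' : (b : ℝ) ≠ 0 := by positivity
    field_simp
  rw [heq]
  have h0 : Filter.Tendsto (fun k : ℕ => ((b : ℝ) - a) + 1/(k+1)) Filter.atTop
      (nhds (((b:ℝ) - a) + 0)) :=
    (tendsto_const_nhds).add tendsto_one_div_add_atTop_nhds_zero_nat
  simpa using h0.div_const (b : ℝ)


theorem stmt19 {Ω : Type} [DecidableEq Ω] (ω ω₂ : Ω) (hω : ω₂ ≠ ω)
    (r : ℝ) (h0 : 0 < r) (h1 : r < 1) :
    (∀ (V : ℕ → Σ n : ℕ, Fin (n + 1) → Ω) (ν : Ω → ℚ)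
        (m : ℕ) (u : Fin (m + 1) → Ω),
      (∀ ω', freqOf u ω' = ν ω') →
      (∀ ω', Filter.Tendsto (fun k => ((freqOf (V k).2 ω' : ℝ))) Filter.atTop
        (nhds ((ν ω' : ℝ)))) →
      ∀ᶠ k in Filter.atTop,
        ((r ≤ (freqOf (V k).2 ω : ℝ)) ↔ (r ≤ (freqOf u ω : ℝ))))
    ↔ Irrational r := by
  constructor
  · intro hcont
    by_contra hrat
    rw [Irrational, not_not] at hrat
    obtain ⟨q, hq⟩ := hrat
    have hq0 : 0 < q := by exact_mod_cast hq ▸ h0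
    have hq1 : q < 1 := by exact_mod_cast hq ▸ h1
    set a : ℕ := q.num.toNat with ha_def
    set b : ℕ := q.den with hb_def
    have hb : 0 < b := q.pos
    have hnum : (a : ℤ) = q.num := Int.toNat_of_nonneg (Rat.num_pos.mpr hq0).le
    have ha : 0 < a := by
      have := Rat.num_pos.mpr hq0; omega
    have hab : a < b := by
      have hd : (0:ℚ) < (q.den : ℚ) := by exact_mod_cast q.pos
      have h' : (q.num : ℚ) < (q.den : ℚ) := by
        rw [← Rat.num_div_den q, div_lt_one hd] at hq1
        exact hq1
      have h'' : q.num < (q.den : ℤ) := by exact_mod_cast h'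
      omega
    have hqab : ((a : ℚ)) / b = q := by
      rw [show ((a : ℚ)) = ((a : ℤ) : ℚ) by push_cast; ring, hnum, hb_def]
      exact Rat.num_div_den q
    set n : ℕ := b - 1 with hn_def
    have hn : n + 1 = b := by omega
    set u : Fin (n + 1) → Ω := fun i => if i.val < a then ω else ω₂ with hu_def
    set V : ℕ → Σ n : ℕ, Fin (n + 1) → Ω :=
      fun k => ⟨b * (k + 1) - 1, fun i => if i.val < a * (k + 1) - 1 then ω else ω₂⟩ with hV_def
    have hlt : ∀ k : ℕ, a * (k + 1) - 1 < b * (k + 1) - 1 + 1 := by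
      intro k
      have := Nat.mul_le_mul_right (k + 1) hab.le
      have : 1 ≤ b * (k+1) := Nat.one_le_iff_ne_zero.mpr (by positivity)
      have : 1 ≤ a * (k+1) := Nat.one_le_iff_ne_zero.mpr (by positivity)
      have := Nat.mul_le_mul_right (k + 1) hab.le
      omega
    -- frequency of u
    have hfu : freqOf u ω = (a : ℚ) / (n + 1) := freq_vec_omega hω (by omega)
    have hfuR : ((freqOf u ω : ℚ) : ℝ) = r := by
      rw [hfu]
      have : ((n : ℚ) + 1) = (b : ℚ) := by exact_mod_cast congrArg (Nat.cast (R := ℚ)) hn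
      rw [this, hqab, hq]
    -- real value of freq of V k at ω
    have hfV : ∀ k : ℕ, ((freqOf (V k).2 ω : ℚ) : ℝ)
        = ((a : ℝ) * (k + 1) - 1) / ((b : ℝ) * (k + 1)) := by
      intro k
      have h1' : 1 ≤ a * (k + 1) := Nat.one_le_iff_ne_zero.mpr (by positivity)
      have h2' : 1 ≤ b * (k + 1) := Nat.one_le_iff_ne_zero.mpr (by positivity)
      have := freq_vec_omega (ω := ω) (ω₂ := ω₂) hω (hlt k)
      show ((freqOf (fun i : Fin (b*(k+1)-1+1) => if i.val < a*(k+1)-1 then ω else ω₂) ω : ℚ) : ℝ) = _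
      rw [this]
      push_cast [Nat.cast_sub h1', Nat.cast_sub h2']
      ring_nf
    have hfV₂ : ∀ k : ℕ, ((freqOf (V k).2 ω₂ : ℚ) : ℝ)
        = (((b : ℝ) - a) * (k + 1) + 1) / ((b : ℝ) * (k + 1)) := by
      intro k
      have h1' : 1 ≤ a * (k + 1) := Nat.one_le_iff_ne_zero.mpr (by positivity)
      have h2' : 1 ≤ b * (k + 1) := Nat.one_le_iff_ne_zero.mpr (by positivity)
      have := freq_vec_omega₂ (ω := ω) (ω₂ := ω₂) hω (hlt k)
      show ((freqOf (fun i : Fin (b*(k+1)-1+1) => if i.val < a*(k+1)-1 then ω else ω₂) ω₂ : ℚ) : ℝ) = _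
      rw [this]
      push_cast [Nat.cast_sub h1', Nat.cast_sub h2']
      ring_nf
    have hT : ∀ ω', Filter.Tendsto (fun k => ((freqOf (V k).2 ω' : ℝ))) Filter.atTop
        (nhds ((freqOf u ω' : ℝ))) := by
      intro ω'
      by_cases hc1 : ω' = ω
      · subst hc1
        have : ((freqOf u ω' : ℚ) : ℝ) = (a : ℝ) / b := by
          rw [hfu]
          have hnb : ((n : ℚ) + 1) = (b : ℚ) := by exact_mod_cast congrArg (Nat.cast (R := ℚ)) hn
          rw [hnb]; push_cast; ring
        rw [this]
        have := tendsto_aux a b hb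
        refine this.congr fun k => ?_
        rw [hfV k]
      by_cases hc2 : ω' = ω₂
      · subst hc2
        have hfu2 : freqOf u ω' = ((n : ℚ) + 1 - a) / (n + 1) := freq_vec_omega₂ hω (by omega)
        have : ((freqOf u ω' : ℚ) : ℝ) = ((b : ℝ) - a) / b := by
          rw [hfu2]
          have hnb : ((n : ℚ) + 1) = (b : ℚ) := by exact_mod_cast congrArg (Nat.cast (R := ℚ)) hn
          rw [hnb]; push_cast; ring
        rw [this]
        have := tendsto_aux₂ a b hb hab.le
        refine this.congr fun k => ?_
        rw [hfV₂ k]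
      · have hz : freqOf u ω' = 0 := freq_vec_other hc1 hc2
        have hzV : ∀ k, freqOf (V k).2 ω' = 0 := fun k => freq_vec_other hc1 hc2
        simp only [hz, hzV]
        simpa using tendsto_const_nhds
    obtain ⟨k, hk⟩ := (hcont V (freqOf u) n u (fun _ => rfl) hT).exists
    have hRHS : r ≤ (freqOf u ω : ℝ) := le_of_eq hfuR.symm
    have hLHS := hk.mpr hRHS
    rw [hfV k] at hLHS
    have hrval : r = (a : ℝ) / b := by
      rw [← hq, ← hqab]; push_cast; ring
    rw [hrval] at hLHS
    have hbpos : (0:ℝ) < (b:ℝ) * (k+1) := by positivity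
    rw [div_le_div_iff₀ (by positivity) hbpos] at hLHS
    have : (0:ℝ) < (b:ℝ) := by positivity
    nlinarith
  · intro hirr V ν m u hu hT
    have hne : ((ν ω : ℚ) : ℝ) ≠ r := fun h => hirr ⟨ν ω, h⟩
    have hur : ((freqOf u ω : ℚ) : ℝ) = ((ν ω : ℚ) : ℝ) := by rw [hu ω]
    rcases lt_or_gt_of_ne hne with h | h
    · filter_upwards [(hT ω).eventually_lt_const h] with k hk
      exact iff_of_false (not_le.mpr hk) (not_le.mpr (hur ▸ h))
    · filter_upwards [(hT ω).eventually_const_lt h] with k hk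
      exact iff_of_true hk.le (hur ▸ h.le)
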